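/- Let f : ℝ → ℝ be continuously differentiable with f(0) ≤ 0 and f(1) > 0. Then there exists λ* ∈ [0, 1) with f(λ*) = 0 such that either deriv f λ* > 0, or (deriv f λ* = 0 and for every ε > 0 there exists λ ∈ (λ*, λ* + ε) with f(λ) ≠ 0). -/

import Mathlib

/-- Locating a violation: if the quantum expansion starts nonpositive but ends positive,
then at some intermediate zero either the rQFC or the genericity assumption fails. -/
theorem violation_of_rQFC_or_genericity
    (f : ℝ → ℝ) (hf : ContDiff ℝ 1 f) (h0 : f 0 ≤ 0) (h1 : 0 < f 1) :
    ∃ l ∈ Set.Ico (0 : ℝ) 1, f l = 0 ∧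
      (0 < deriv f l ∨
        (deriv f l = 0 ∧ ∀ ε > 0, ∃ l' ∈ Set.Ioo l (l + ε), f l' ≠ 0)) := by
  have hcont : Continuous f := hf.continuous
  set S : Set ℝ := Set.Icc 0 1 ∩ f ⁻¹' Set.Iic 0 with hS
  have hSne : S.Nonempty := ⟨0, ⟨le_rfl, zero_le_one⟩, h0⟩
  have hSbdd : BddAbove S := ⟨1, fun x hx => hx.1.2⟩
  have hSclosed : IsClosed S :=
    (isClosed_Icc).inter (isClosed_Iic.preimage hcont)
  set l := sSup S with hl
  have hlS : l ∈ S := hSclosed.csSup_mem hSne hSbdd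
  have hl0 : 0 ≤ l := hlS.1.1
  have hl1 : l ≤ 1 := hlS.1.2
  have hfl_le : f l ≤ 0 := hlS.2
  have hlne : l ≠ 1 := by
    intro h
    rw [h] at hfl_le; linarith
  have hl1' : l < 1 := lt_of_le_of_ne hl1 hlne
  -- f x > 0 for x ∈ (l, 1]
  have hpos : ∀ x, l < x → x ≤ 1 → 0 < f x := by
    intro x hx hx1
    by_contra h
    push_neg at h
    have hxS : x ∈ S := ⟨⟨le_trans hl0 hx.le, hx1⟩, h⟩
    exact absurd (le_csSup hSbdd hxS) (not_le.mpr hx)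
  -- f l ≥ 0 by right continuity
  have hne : (nhdsWithin l (Set.Ioi l)).NeBot := nhdsGT_neBot l
  have hfl_ge : 0 ≤ f l := by
    have htend : Filter.Tendsto f (nhdsWithin l (Set.Ioi l)) (nhds (f l)) :=
      (hcont.tendsto l).mono_left nhdsWithin_le_nhds
    refine ge_of_tendsto htend ?_
    filter_upwards [Ioo_mem_nhdsGT_of_mem ⟨le_rfl, hl1'⟩] with x hx
    exact (hpos x hx.1 hx.2.le).le
  have hfl : f l = 0 := le_antisymm hfl_le hfl_ge
  -- derivative at l is nonneg
  have hdiff : HasDerivAt f (deriv f l) l :=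
    ((hf.differentiable one_ne_zero) l).hasDerivAt
  have hd : 0 ≤ deriv f l := by
    have hslope : Filter.Tendsto (slope f l) (nhdsWithin l {l}ᶜ) (nhds (deriv f l)) :=
      hasDerivAt_iff_tendsto_slope.mp hdiff
    have hslope' : Filter.Tendsto (slope f l) (nhdsWithin l (Set.Ioi l)) (nhds (deriv f l)) :=
      hslope.mono_left (nhdsWithin_mono _ (fun x hx => ne_of_gt hx))
    refine ge_of_tendsto hslope' ?_
    filter_upwards [Ioo_mem_nhdsGT_of_mem ⟨le_rfl, hl1'⟩] with x hx
    have : 0 < f x := hpos x hx.1 hx.2.le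
    have hxl : 0 < x - l := by linarith [hx.1]
    rw [slope_def_field, hfl, div_eq_mul_inv]
    have : (0:ℝ) ≤ (x - l)⁻¹ := inv_nonneg.mpr hxl.le
    nlinarith
  refine ⟨l, ⟨hl0, hl1'⟩, hfl, ?_⟩
  rcases lt_or_eq_of_le hd with hd' | hd'
  · exact Or.inl hd'
  · refine Or.inr ⟨hd'.symm, fun ε hε => ?_⟩
    refine ⟨min (l + ε / 2) ((l + 1) / 2), ⟨?_, ?_⟩, ?_⟩
    · apply lt_min <;> linarith
    · calc min (l + ε / 2) ((l + 1) / 2) ≤ l + ε / 2 := min_le_left _ _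
        _ < l + ε := by linarith
    · have h1' : l < min (l + ε / 2) ((l + 1) / 2) := by apply lt_min <;> linarith
      have h2' : min (l + ε / 2) ((l + 1) / 2) ≤ 1 := by
        calc min (l + ε / 2) ((l + 1) / 2) ≤ (l + 1) / 2 := min_le_right _ _
          _ ≤ 1 := by linarith
      exact ne_of_gt (hpos _ h1' h2')
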